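/- Let β ≥ 1 and C ≥ (e/β)^β, and suppose x > 1 satisfies x = C log^β(x). Then x ≤ e^{(α−1)β} β^β C log^β(β C^{1/β}), where α = 2 − log(e−1). -/

import Mathlib

open Matrix MeasureTheory ProbabilityTheory
open scoped Classical RealInnerProductSpace

/-- Operator (spectral) norm of a real matrix. -/
noncomputable def opNorm {m n : Type*} [Fintype m] [Fintype n] [DecidableEq n]
    (A : Matrix m n ℝ) : ℝ :=
  ‖LinearMap.toContinuousLinearMap (Matrix.toEuclideanLin A)‖

/-- Frobenius norm of a real matrix. -/
noncomputable def frob {m n : Type*} [Fintype m] [Fintype n] (A : Matrix m n ℝ) : ℝ :=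
  Real.sqrt (∑ i, ∑ j, (A i j) ^ 2)

/-- Positive semidefinite square root (junk value `0` off the PSD matrices). -/
noncomputable def sqrtPD {n : Type*} [Fintype n] [DecidableEq n]
    (A : Matrix n n ℝ) : Matrix n n ℝ :=
  if h : A.PosSemidef then
    (h.1.eigenvectorUnitary : Matrix n n ℝ) *
      Matrix.diagonal (((↑) : ℝ → ℝ) ∘ Real.sqrt ∘ h.1.eigenvalues) *
      (star (h.1.eigenvectorUnitary : Matrix n n ℝ))
  else 0

/-- Matrix logarithm of a hermitian matrix via the spectral theorem
(junk value `0` off the hermitian matrices). -/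
noncomputable def mlog {n : Type*} [Fintype n] [DecidableEq n]
    (A : Matrix n n ℝ) : Matrix n n ℝ :=
  if h : A.IsHermitian then
    (h.eigenvectorUnitary : Matrix n n ℝ) * Matrix.diagonal (Real.log ∘ h.eigenvalues) *
      (star (h.eigenvectorUnitary : Matrix n n ℝ))
  else 0

/-- Thompson (invariant) metric `δ∞(A,B) = ‖log (A^{-1/2} B A^{-1/2})‖`. -/
noncomputable def thompson {n : Type*} [Fintype n] [DecidableEq n]
    (A B : Matrix n n ℝ) : ℝ :=
  opNorm (mlog ((sqrtPD A)⁻¹ * B * (sqrtPD A)⁻¹))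

/-- Largest (real) eigenvalue. -/
noncomputable def lamMax {n : Type*} [Fintype n] [DecidableEq n] (A : Matrix n n ℝ) : ℝ :=
  sSup (spectrum ℝ A)

/-- Smallest (real) eigenvalue. -/
noncomputable def lamMin {n : Type*} [Fintype n] [DecidableEq n] (A : Matrix n n ℝ) : ℝ :=
  sInf (spectrum ℝ A)

/-- Solution `P = Σ_{k≥0} (Lᵀ)^k M L^k` of the discrete Lyapunov equation `P = Lᵀ P L + M`. -/
noncomputable def dlyap {n : Type*} [Fintype n] [DecidableEq n]
    (L M : Matrix n n ℝ) : Matrix n n ℝ :=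
  ∑' k : ℕ, (L ^ k)ᵀ * M * (L ^ k)

/-- `K` stabilizes `(A,B)`: the closed loop matrix `A + BK` has spectral radius `< 1`. -/
def Stabilizes {n d : Type*} [Fintype n] [DecidableEq n] [Fintype d]
    (A : Matrix n n ℝ) (B : Matrix n d ℝ) (K : Matrix d n ℝ) : Prop :=
  ∀ z ∈ spectrum ℂ ((A + B * K).map ((↑) : ℝ → ℂ)), ‖z‖ < 1

/-- Lambert-`W`-type bound on the solution of `x = C log^β(x)`. -/
theorem lambert_w_bound (β C x : ℝ) (hβ : 1 ≤ β) (hC : (Real.exp 1 / β) ^ β ≤ C)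
    (hx : 1 < x) (heq : x = C * Real.log x ^ β) :
    x ≤ Real.exp ((2 - Real.log (Real.exp 1 - 1) - 1) * β) * β ^ β * C *
      Real.log (β * C ^ (1 / β)) ^ β := by
  set E := Real.exp 1 with hE
  clear_value E
  have hE1 : 2 < E := by
    have := Real.add_one_lt_exp (x := 1) one_ne_zero
    rw [hE]; linarith
  have hem : 0 < E - 1 := by linarith
  have hβ0 : (0:ℝ) < β := by linarith
  set y := Real.log x with hy_def
  clear_value y
  have hy : 0 < y := by rw [hy_def]; exact Real.log_pos hx
  have hyβ : 0 < y ^ β := Real.rpow_pos_of_pos hy β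
  have hC0 : 0 < C := by
    by_contra h
    push_neg at h
    nlinarith [heq, hx]
  have hlog : y = Real.log C + β * Real.log y := by
    conv_lhs => rw [hy_def, heq]
    rw [Real.log_mul hC0.ne' hyβ.ne', Real.log_rpow hy]
  have hlogE : Real.log E = 1 := by rw [hE]; exact Real.log_exp 1
  -- lower bound on log C
  have hlogC : β * (1 - Real.log β) ≤ Real.log C := by
    have hEβ : 0 < E / β := div_pos (by linarith) hβ0
    have h1 : Real.log ((E / β) ^ β) ≤ Real.log C :=
      Real.log_le_log (Real.rpow_pos_of_pos hEβ β) hC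
    rwa [Real.log_rpow hEβ, Real.log_div (by linarith) hβ0.ne', hlogE] at h1
  set t := β * Real.log β + Real.log C with ht_def
  clear_value t
  have ht : β ≤ t := by nlinarith [hlogC]
  have ht0 : 0 < t := lt_of_lt_of_le hβ0 ht
  set K := Real.exp (1 - Real.log (E - 1)) with hK
  clear_value K
  have hKpos : 0 < K := by rw [hK]; exact Real.exp_pos _
  have hKval : K = E / (E - 1) := by
    rw [hK, Real.exp_sub, Real.exp_log hem, ← hE]
  have hK1 : 1 < K := by
    rw [hKval]
    rw [lt_div_iff₀ hem]; linarith
  have hKt_pos : 0 < K * t := mul_pos hKpos ht0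
  -- the Lambert-type inequality at K*t
  have fKt : t - β * Real.log β ≤ K * t - β * Real.log (K * t) := by
    set u := t / (β * (E - 1)) with hu_def
    clear_value u
    have hu : 0 < u := by rw [hu_def]; exact div_pos ht0 (mul_pos hβ0 hem)
    have h1 : Real.log u ≤ u - 1 := Real.log_le_sub_one_of_pos hu
    have hKtEu : K * t = β * (E * u) := by
      rw [hKval, hu_def]; field_simp
    have h3 : Real.log (K * t) = Real.log β + (1 + Real.log u) := by
      rw [hKtEu, Real.log_mul hβ0.ne' (by positivity),
        Real.log_mul (by positivity) hu.ne', hlogE]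
    have hβu : β * u = t / (E - 1) := by
      rw [hu_def]; field_simp
    have hKtt : K * t = t + t / (E - 1) := by
      rw [hKval]; field_simp; ring
    have h4 : β * Real.log (K * t) = β * Real.log β + β * (1 + Real.log u) := by
      rw [h3]; ring
    have h5 : β * (1 + Real.log u) ≤ t / (E - 1) := by
      rw [← hβu]; nlinarith [h1, hβ0]
    linarith [h4, h5, hKtt]
  -- main claim : y ≤ K * t
  have key : y ≤ K * t := by
    rcases le_or_gt y (K * t) with h | h
    · exact h
    · exfalso
      have hKtβ : β < K * t := lt_of_le_of_lt ht (by nlinarith [hK1, ht0])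
      have hyKt : 0 < y / (K * t) := div_pos hy hKt_pos
      have hne : y / (K * t) ≠ 1 := by
        intro hh
        have := (div_eq_one_iff_eq hKt_pos.ne').1 hh
        linarith
      have h5 : Real.log (y / (K * t)) < y / (K * t) - 1 :=
        Real.log_lt_sub_one_of_pos hyKt hne
      have h6 : Real.log (y / (K * t)) = Real.log y - Real.log (K * t) :=
        Real.log_div hy.ne' hKt_pos.ne'
      have hq : β * (y / (K * t) - 1) ≤ y - K * t := by
        rw [← sub_nonneg]
        have hrw : y - K * t - β * (y / (K * t) - 1)
            = (y - K * t) * (K * t - β) / (K * t) := by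
          field_simp
        rw [hrw]
        exact div_nonneg (mul_nonneg (by linarith) (by linarith)) hKt_pos.le
      have h7 : β * (Real.log y - Real.log (K * t)) < y - K * t := by
        have := mul_lt_mul_of_pos_left (h6 ▸ h5) hβ0
        linarith
      linarith [hlog, fKt, h7]
  -- relate log(β C^{1/β}) to t
  have hCpow : 0 < C ^ (1 / β) := Real.rpow_pos_of_pos hC0 _
  have hL : β * Real.log (β * C ^ (1 / β)) = t := by
    rw [Real.log_mul hβ0.ne' hCpow.ne', Real.log_rpow hC0, ht_def]
    field_simp
  have hLpos : 0 < Real.log (β * C ^ (1 / β)) := by nlinarith [hL, ht, hβ0]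
  -- assemble
  rw [heq]
  have hRHS : Real.exp ((2 - Real.log (E - 1) - 1) * β) * β ^ β * C *
      Real.log (β * C ^ (1 / β)) ^ β = C * (K * t) ^ β := by
    have h2 : (2 - Real.log (E - 1) - 1) = 1 - Real.log (E - 1) := by ring
    rw [h2, Real.exp_mul, ← hK, ← hL,
      Real.mul_rpow hKpos.le (by positivity),
      Real.mul_rpow hβ0.le hLpos.le]
    ring
  rw [hRHS]
  exact mul_le_mul_of_nonneg_left (Real.rpow_le_rpow hy.le key hβ0.le) hC0.le
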